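/- Let A : [0,1) → (0,1/2) be decreasing with A(r) → 0 as r → 1⁻. Then there exists a 2π-periodic function f ∈ L¹([−π,π]) (in particular Henstock–Kurzweil integrable) such that, with u_r(θ) = P[f](re^{iθ}), one has ‖u_r − f‖ ≥ A(r) for all 0 ≤ r < 1; that is, the convergence ‖u_r − f‖ → 0 can be arbitrarily slow. -/

import Mathlib

open Real Filter MeasureTheory Set Topology

noncomputable section

/-- The Poisson kernel for the unit disc. -/
def discPoissonKernel (r θ : ℝ) : ℝ :=
  (1 - r ^ 2) / (2 * π * (1 - 2 * r * Real.cos θ + r ^ 2))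

/-- The Poisson integral of an integrable `f`, evaluated at the point `r e^{iθ}`. -/
def poissonIntegral (f : ℝ → ℝ) (r θ : ℝ) : ℝ :=
  ∫ φ in (-π)..π, f φ * discPoissonKernel r (φ - θ)

/-- The Alexiewicz norm over the circle: the supremum of `|∫_I g|` over intervals `I`
of length at most `2π`. -/
def alexNorm (g : ℝ → ℝ) : ℝ :=
  sSup {v | ∃ a b : ℝ, a ≤ b ∧ b - a ≤ 2 * π ∧ v = |∫ x in a..b, g x|}

/-- The `L^p` norm on `[-π,π]`. -/
def lpNorm (p : ℝ) (g : ℝ → ℝ) : ℝ :=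
  (∫ θ in (-π)..π, |g θ| ^ p) ^ (1 / p)

namespace SlowPoisson

lemma denom_pos {r : ℝ} (h0 : 0 ≤ r) (h1 : r < 1) (θ : ℝ) :
    0 < 1 - 2 * r * Real.cos θ + r ^ 2 := by
  nlinarith [Real.cos_le_one θ, sq_nonneg (1 - r)]

lemma pk_nonneg {r : ℝ} (h0 : 0 ≤ r) (h1 : r < 1) (θ : ℝ) : 0 ≤ discPoissonKernel r θ := by
  apply div_nonneg
  · nlinarith
  · have := denom_pos h0 h1 θ
    positivity

lemma pk_le {r : ℝ} (h0 : 0 ≤ r) (h1 : r < 1) (θ : ℝ) :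
    discPoissonKernel r θ ≤ (1 - r ^ 2) / (2 * π * (1 - r) ^ 2) := by
  have h1r : (0:ℝ) < 1 - r := by linarith
  have hb : (0:ℝ) < 2 * π * (1 - r) ^ 2 := by
    have := Real.pi_pos; positivity
  apply div_le_div_of_nonneg_left (by nlinarith) hb
  nlinarith [mul_nonneg (mul_nonneg Real.pi_pos.le h0) (sub_nonneg.2 (Real.cos_le_one θ))]

lemma pk_continuous {r : ℝ} (h0 : 0 ≤ r) (h1 : r < 1) :
    Continuous (discPoissonKernel r) := by
  apply Continuous.div continuous_const
  · fun_prop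
  · intro θ
    have h := denom_pos h0 h1 θ
    have := Real.pi_pos
    positivity


variable (ρ : ℕ → ℝ)

def eps (k : ℕ) : ℝ := min ((1/3 : ℝ) ^ (k+1)) ((1 - ρ k) * (1/2 : ℝ) ^ k / 4)

def J (k : ℕ) : Set ℝ := Ioc ((1/3:ℝ)^k) ((1/3:ℝ)^k + eps ρ k)

def bump (k : ℕ) : ℝ → ℝ := (J ρ k).indicator fun _ => 2 * (1/2:ℝ)^k / eps ρ k

def gg (θ : ℝ) : ℝ := ∑' k, bump ρ k θ

def ff (θ : ℝ) : ℝ := gg ρ (θ - 2*π*⌊θ/(2*π)⌋)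

variable (hρ : ∀ k, ρ k < 1)
include hρ

lemma eps_pos (k : ℕ) : 0 < eps ρ k := by
  have := hρ k
  apply lt_min (by positivity)
  have h1 : (0:ℝ) < 1 - ρ k := by linarith
  positivity

omit hρ in
lemma eps_le (k : ℕ) : eps ρ k ≤ (1/3:ℝ)^(k+1) := min_le_left _ _

omit hρ in
lemma eps_le' (k : ℕ) : eps ρ k ≤ (1 - ρ k) * (1/2:ℝ)^k / 4 := min_le_right _ _

lemma J_subset (k : ℕ) : J ρ k ⊆ Ioc 0 (3/2 : ℝ) := by
  intro θ hθ
  obtain ⟨h1, h2⟩ := hθ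
  constructor
  · exact lt_trans (by positivity) h1
  · have h3 : eps ρ k ≤ (1/3:ℝ)^(k+1) := eps_le ρ k
    have h4 : ((1:ℝ)/3)^k ≤ 1 := pow_le_one₀ (by norm_num) (by norm_num)
    have h5 : ((1:ℝ)/3)^(k+1) ≤ 1/3 := by
      simpa using pow_le_pow_of_le_one (by norm_num : (0:ℝ) ≤ 1/3) (by norm_num)
        (Nat.one_le_iff_ne_zero.2 (Nat.succ_ne_zero k))
    linarith

lemma J_disjoint {j k : ℕ} (hjk : j ≠ k) {θ : ℝ} (hθ : θ ∈ J ρ k) : θ ∉ J ρ j := by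
  obtain ⟨h1, h2⟩ := hθ
  have h2' : θ ≤ (1/3:ℝ)^k + (1/3:ℝ)^(k+1) := le_trans h2 (by linarith [eps_le ρ k])
  intro hj
  obtain ⟨g1, g2⟩ := hj
  have g2' : θ ≤ (1/3:ℝ)^j + (1/3:ℝ)^(j+1) := le_trans g2 (by linarith [eps_le ρ j])
  rcases lt_or_gt_of_ne hjk with h | h
  · -- j < k : θ ≤ (4/3)(1/3)^k ≤ (4/9)(1/3)^j < (1/3)^j < θ, contradiction
    have hk : (k:ℕ) ≥ j + 1 := h
    have hp : ((1:ℝ)/3)^k ≤ ((1:ℝ)/3)^(j+1) :=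
      pow_le_pow_of_le_one (by norm_num) (by norm_num) hk
    have hp2 : ((1:ℝ)/3)^(k+1) ≤ ((1:ℝ)/3)^(j+1) :=
      pow_le_pow_of_le_one (by norm_num) (by norm_num) (by omega)
    have : ((1:ℝ)/3)^(j+1) = (1/3) * ((1:ℝ)/3)^j := by ring
    nlinarith [pow_pos (by norm_num : (0:ℝ) < 1/3) j]
  · -- k < j
    have hp : ((1:ℝ)/3)^j ≤ ((1:ℝ)/3)^(k+1) :=
      pow_le_pow_of_le_one (by norm_num) (by norm_num) h
    have hp2 : ((1:ℝ)/3)^(j+1) ≤ ((1:ℝ)/3)^(k+1) :=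
      pow_le_pow_of_le_one (by norm_num) (by norm_num) (by omega)
    have : ((1:ℝ)/3)^(k+1) = (1/3) * ((1:ℝ)/3)^k := by ring
    nlinarith [pow_pos (by norm_num : (0:ℝ) < 1/3) k]

lemma gg_eq_on_J {k : ℕ} {θ : ℝ} (hθ : θ ∈ J ρ k) :
    gg ρ θ = 2 * (1/2:ℝ)^k / eps ρ k := by
  unfold gg
  rw [tsum_eq_single k]
  · exact Set.indicator_of_mem hθ _
  · intro j hjk
    exact Set.indicator_of_notMem (J_disjoint ρ hρ hjk hθ) _

lemma gg_eq_zero {θ : ℝ} (hθ : θ ∉ Ioc (0:ℝ) (3/2)) : gg ρ θ = 0 := by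
  unfold gg
  have : ∀ k, bump ρ k θ = 0 := fun k =>
    Set.indicator_of_notMem (fun h => hθ (J_subset ρ hρ k h)) _
  simp [this]

lemma bump_nonneg (k : ℕ) (θ : ℝ) : 0 ≤ bump ρ k θ := by
  apply Set.indicator_nonneg
  intro _ _
  have := eps_pos ρ hρ k
  positivity

lemma summable_bump (θ : ℝ) : Summable (fun k => bump ρ k θ) := by
  by_cases h : ∃ k, θ ∈ J ρ k
  · obtain ⟨k0, hk0⟩ := h
    apply summable_of_ne_finset_zero (s := {k0})
    intro j hj
    simp only [Finset.mem_singleton] at hj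
    exact Set.indicator_of_notMem (J_disjoint ρ hρ hj hk0) _
  · push_neg at h
    apply summable_of_ne_finset_zero (s := ∅)
    intro j _
    exact Set.indicator_of_notMem (h j) _

lemma gg_nonneg (θ : ℝ) : 0 ≤ gg ρ θ :=
  tsum_nonneg (bump_nonneg ρ hρ · θ)

lemma measurable_gg : Measurable (gg ρ) := by
  have hmb : ∀ k, Measurable (bump ρ k) := fun k =>
    Measurable.indicator measurable_const measurableSet_Ioc
  apply measurable_of_tendsto_metrizable
    (f := fun n θ => ∑ k ∈ Finset.range n, bump ρ k θ)
  · intro n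
    exact Finset.measurable_sum _ fun k _ => hmb k
  · rw [tendsto_pi_nhds]
    intro θ
    exact ((summable_bump ρ hρ θ).hasSum).tendsto_sum_nat


lemma lint_bump (k : ℕ) :
    ∫⁻ θ, ENNReal.ofReal (bump ρ k θ) = ENNReal.ofReal (2 * (1/2:ℝ)^k) := by
  have hc : (0:ℝ) ≤ 2 * (1/2:ℝ)^k / eps ρ k := by
    have := eps_pos ρ hρ k; positivity
  have hJ : MeasurableSet (J ρ k) := measurableSet_Ioc
  have h1 : ∫⁻ θ, ENNReal.ofReal (bump ρ k θ)
      = ∫⁻ θ, (J ρ k).indicator (fun _ => ENNReal.ofReal (2 * (1/2:ℝ)^k / eps ρ k)) θ :=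
    lintegral_congr (fun θ => by by_cases h : θ ∈ J ρ k <;> simp [bump, h])
  rw [h1, lintegral_indicator hJ, setLIntegral_const]
  have hvol : volume (J ρ k) = ENNReal.ofReal (eps ρ k) := by
    rw [J, Real.volume_Ioc]; ring_nf
  rw [hvol, ← ENNReal.ofReal_mul hc, div_mul_cancel₀]
  exact (eps_pos ρ hρ k).ne'

lemma sum_lint_bump :
    ∑' k, ∫⁻ θ, ENNReal.ofReal (bump ρ k θ) = ENNReal.ofReal 4 := by
  have h1 : ∀ k, ∫⁻ θ, ENNReal.ofReal (bump ρ k θ) = ENNReal.ofReal (2 * (1/2:ℝ)^k) :=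
    lint_bump ρ hρ
  rw [tsum_congr h1, ← ENNReal.ofReal_tsum_of_nonneg (fun k => by positivity)]
  · congr 1
    rw [tsum_mul_left, tsum_geometric_of_lt_one (by norm_num) (by norm_num)]
    norm_num
  · exact (summable_geometric_of_lt_one (by norm_num) (by norm_num)).mul_left 2

lemma integrable_gg : Integrable (gg ρ) := by
  refine ⟨(measurable_gg ρ hρ).aestronglyMeasurable, ?_⟩
  rw [hasFiniteIntegral_iff_norm]
  have : ∀ θ, ENNReal.ofReal ‖gg ρ θ‖ = ENNReal.ofReal (gg ρ θ) := by
    intro θ; rw [Real.norm_eq_abs, abs_of_nonneg (gg_nonneg ρ hρ θ)]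
  calc ∫⁻ θ, ENNReal.ofReal ‖gg ρ θ‖
      = ∫⁻ θ, ENNReal.ofReal (gg ρ θ) := by simp_rw [this]
    _ = ∫⁻ θ, ∑' k, ENNReal.ofReal (bump ρ k θ) := by
        apply lintegral_congr; intro θ
        rw [gg, ENNReal.ofReal_tsum_of_nonneg (fun k => bump_nonneg ρ hρ k θ)
          (summable_bump ρ hρ θ)]
    _ = ∑' k, ∫⁻ θ, ENNReal.ofReal (bump ρ k θ) := by
        apply lintegral_tsum
        intro k
        exact ((Measurable.indicator measurable_const measurableSet_Ioc).ennreal_ofReal).aemeasurable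
    _ = ENNReal.ofReal 4 := sum_lint_bump ρ hρ
    _ < ⊤ := ENNReal.ofReal_lt_top

lemma integral_gg : ∫ θ, gg ρ θ = 4 := by
  have hmeas : ∀ k, AEStronglyMeasurable (bump ρ k) volume := fun k =>
    (Measurable.indicator measurable_const measurableSet_Ioc).aestronglyMeasurable
  have h4 : (∑' (k : ℕ), ∫⁻ (a : ℝ), (‖bump ρ k a‖₊ : ENNReal)) ≠ ⊤ := by
    have : ∀ k, ∫⁻ (a : ℝ), (‖bump ρ k a‖₊ : ENNReal) = ∫⁻ a, ENNReal.ofReal (bump ρ k a) := by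
      intro k; apply lintegral_congr; intro a
      rw [← enorm_eq_nnnorm, ← ofReal_norm, Real.norm_eq_abs, abs_of_nonneg (bump_nonneg ρ hρ k a)]
    rw [tsum_congr this, sum_lint_bump ρ hρ]
    exact ENNReal.ofReal_ne_top
  have hit := MeasureTheory.integral_tsum hmeas h4
  rw [show (∫ θ, gg ρ θ) = ∫ θ, ∑' k, bump ρ k θ from rfl, hit]
  have hbint : ∀ k, ∫ θ, bump ρ k θ = 2 * (1/2:ℝ)^k := by
    intro k
    have hJ : MeasurableSet (J ρ k) := measurableSet_Ioc
    rw [bump, MeasureTheory.integral_indicator_const _ hJ]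
    have hvol : volume (J ρ k) = ENNReal.ofReal (eps ρ k) := by
      rw [J, Real.volume_Ioc]; ring_nf
    rw [measureReal_def, hvol, smul_eq_mul, ENNReal.toReal_ofReal (eps_pos ρ hρ k).le]
    have he := eps_pos ρ hρ k
    field_simp
  rw [tsum_congr hbint, tsum_mul_left, tsum_geometric_of_lt_one (by norm_num) (by norm_num)]
  norm_num

lemma integral_J_gg (k : ℕ) : ∫ θ in J ρ k, gg ρ θ = 2 * (1/2:ℝ)^k := by
  have hJ : MeasurableSet (J ρ k) := measurableSet_Ioc
  rw [MeasureTheory.setIntegral_congr_fun hJ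
    (fun θ hθ => gg_eq_on_J ρ hρ (k := k) hθ)]
  rw [MeasureTheory.setIntegral_const]
  have hvol : volume (J ρ k) = ENNReal.ofReal (eps ρ k) := by
    rw [J, Real.volume_Ioc]; ring_nf
  rw [measureReal_def, hvol, smul_eq_mul, ENNReal.toReal_ofReal (eps_pos ρ hρ k).le]
  have he := eps_pos ρ hρ k
  field_simp


omit hρ in
lemma ff_periodic : Function.Periodic (ff ρ) (2*π) := by
  intro θ
  unfold ff
  have hπ : (2:ℝ)*π ≠ 0 := by positivity
  have h1 : (θ + 2*π) / (2*π) = θ/(2*π) + 1 := by field_simp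
  rw [h1, Int.floor_add_one]
  push_cast
  ring_nf

lemma ff_eq_gg {θ : ℝ} (h : θ ∈ Ico 0 (2*π)) : ff ρ θ = gg ρ θ := by
  unfold ff
  have h0 : ⌊θ/(2*π)⌋ = 0 := by
    rw [Int.floor_eq_zero_iff]
    have hπ : (0:ℝ) < 2*π := by positivity
    constructor
    · exact div_nonneg h.1 hπ.le
    · rw [div_lt_one hπ]; exact h.2
  rw [h0]
  norm_num

lemma ff_eq_gg' {θ : ℝ} (h : θ ∈ Icc (-π) π) : ff ρ θ = gg ρ θ := by
  have hπ := Real.pi_gt_three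
  rcases le_or_gt 0 θ with h0 | h0
  · exact ff_eq_gg ρ hρ ⟨h0, by nlinarith [h.2]⟩
  · -- θ ∈ [-π, 0): ff θ = gg (θ + 2π) = 0 = gg θ
    have hfl : ⌊θ/(2*π)⌋ = -1 := by
      rw [Int.floor_eq_iff]
      have hπ2 : (0:ℝ) < 2*π := by positivity
      constructor
      · push_cast
        rw [neg_le, ← neg_div, div_le_one hπ2]
        nlinarith [h.1]
      · push_cast
        norm_num
        exact div_neg_of_neg_of_pos h0 hπ2
    unfold ff
    rw [hfl]
    push_cast
    have e1 : θ - 2*π*(-1) = θ + 2*π := by ring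
    rw [e1]
    rw [gg_eq_zero ρ hρ (θ := θ + 2*π) (by
      intro hm
      nlinarith [hm.2, h.1]), gg_eq_zero ρ hρ (θ := θ) (by
      intro hm
      nlinarith [hm.1])]

lemma ff_nonneg (θ : ℝ) : 0 ≤ ff ρ θ := gg_nonneg ρ hρ _

lemma measurable_ff : Measurable (ff ρ) := by
  apply (measurable_gg ρ hρ).comp
  apply Measurable.sub measurable_id
  apply Measurable.mul measurable_const
  have h1 : Measurable fun θ : ℝ => ⌊θ / (2*π)⌋ :=
    Measurable.floor (Measurable.div_const measurable_id _)
  exact Measurable.comp (measurable_from_top) h1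


lemma integrableOn_ff_Icc : IntegrableOn (ff ρ) (Icc (-π) π) := by
  apply ((integrable_gg ρ hρ).integrableOn).congr_fun (fun θ hθ => (ff_eq_gg' ρ hρ hθ).symm)
    measurableSet_Icc

lemma intervalIntegrable_ff_0T : IntervalIntegrable (ff ρ) volume 0 (2*π) := by
  have hπ : (0:ℝ) ≤ 2*π := by positivity
  rw [intervalIntegrable_iff_integrableOn_Ioc_of_le hπ]
  apply ((integrable_gg ρ hρ).integrableOn).congr_fun_ae
  have hne : ∀ᵐ (θ:ℝ) ∂(volume.restrict (Ioc 0 (2*π))), θ ≠ 2*π := by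
    refine ae_restrict_of_ae ?_
    rw [ae_iff]
    have : {θ : ℝ | ¬θ ≠ 2*π} = {2*π} := by ext θ; simp
    rw [this]
    exact Real.volume_singleton
  have hmem : ∀ᵐ (θ:ℝ) ∂(volume.restrict (Ioc 0 (2*π))), θ ∈ Ioc 0 (2*π) :=
    ae_restrict_mem measurableSet_Ioc
  filter_upwards [hne, hmem] with θ h1 h2
  exact (ff_eq_gg ρ hρ ⟨h2.1.le, lt_of_le_of_ne h2.2 h1⟩).symm

lemma intervalIntegrable_ff (a b : ℝ) : IntervalIntegrable (ff ρ) volume a b := by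
  have hT : (0:ℝ) < 2*π := by positivity
  -- integrable on each period [n(2π), (n+1)(2π)]
  have hper : ∀ n : ℤ, IntervalIntegrable (ff ρ) volume (n*(2*π)) (2*π + n*(2*π)) := by
    intro n
    have h := (intervalIntegrable_ff_0T ρ hρ).comp_sub_right (n*(2*π))
    have heq : (fun x => ff ρ (x - n*(2*π))) = ff ρ := by
      funext x
      exact (ff_periodic ρ).sub_int_mul_eq n
    rw [heq] at h
    simpa using h
  have hnat : ∀ N : ℕ, IntervalIntegrable (ff ρ) volume (-(N*(2*π))) (N*(2*π)) := by
    intro N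
    induction N with
    | zero => simp
    | succ n ih =>
      have h1 : IntervalIntegrable (ff ρ) volume (-((n+1:ℕ)*(2*π))) (-(n*(2*π))) := by
        have := hper (-(n+1))
        push_cast at this ⊢
        have e1 : (-(n+1):ℝ)*(2*π) = -((n+1)*(2*π)) := by ring
        have e2 : 2*π + (-(n+1):ℝ)*(2*π) = -(n*(2*π)) := by ring
        rw [e1] at e2
        rw [e1, e2] at this
        exact this
      have h2 : IntervalIntegrable (ff ρ) volume ((n:ℝ)*(2*π)) ((n+1:ℕ)*(2*π)) := by
        have := hper n
        push_cast at this ⊢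
        have e2 : 2*π + (n:ℝ)*(2*π) = (n+1)*(2*π) := by ring
        rw [e2] at this
        exact this
      exact (h1.trans ih).trans h2
  obtain ⟨N, hN⟩ := exists_nat_gt ((max |a| |b|)/(2*π))
  have hN' : max |a| |b| < N*(2*π) := by
    rw [div_lt_iff₀ hT] at hN
    linarith
  apply (hnat N).mono_set
  have hb1 : -(N*(2*π)) ≤ a ∧ a ≤ N*(2*π) := by
    have h1 := neg_abs_le a; have h2 := le_abs_self a
    have h3 := le_max_left |a| |b|
    constructor <;> linarith
  have hb2 : -(N*(2*π)) ≤ b ∧ b ≤ N*(2*π) := by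
    have h1 := neg_abs_le b; have h2 := le_abs_self b
    have h3 := le_max_right |a| |b|
    constructor <;> linarith
  apply Set.uIcc_subset_uIcc
  · exact Set.mem_uIcc.2 (Or.inl ⟨hb1.1, hb1.2⟩)
  · exact Set.mem_uIcc.2 (Or.inl ⟨hb2.1, hb2.2⟩)

lemma integral_ff : ∫ θ in (-π)..π, ff ρ θ = 4 := by
  have hle : -π ≤ π := by linarith [Real.pi_pos]
  rw [intervalIntegral.integral_of_le hle]
  have h1 : ∫ θ in Ioc (-π) π, ff ρ θ = ∫ θ in Ioc (-π) π, gg ρ θ :=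
    MeasureTheory.setIntegral_congr_fun measurableSet_Ioc
      (fun θ hθ => ff_eq_gg' ρ hρ ⟨hθ.1.le, hθ.2⟩)
  rw [h1]
  rw [MeasureTheory.setIntegral_eq_integral_of_forall_compl_eq_zero (f := gg ρ)]
  · exact integral_gg ρ hρ
  · intro θ hθ
    apply gg_eq_zero ρ hρ
    intro hm
    simp only [mem_Ioc, not_and_or, not_lt, not_le] at hθ
    have h32 : (3:ℝ)/2 < π := by nlinarith [Real.pi_gt_three]
    rcases hθ with h | h
    · exact absurd hm.1 (not_lt.2 (le_trans h (by linarith)))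
    · nlinarith [hm.2]

lemma integral_ff_period (a : ℝ) : ∫ θ in a..(a + 2*π), ff ρ θ = 4 := by
  have := (ff_periodic ρ).intervalIntegral_add_eq a (-π)
  rw [this]
  have e : -π + 2*π = π := by ring
  rw [e]
  exact integral_ff ρ hρ


variable {x : ℝ} (hx0 : 0 ≤ x) (hx1 : x < 1)
include hx0 hx1

lemma integrand_intble (θ : ℝ) :
    IntervalIntegrable (fun φ => ff ρ φ * discPoissonKernel x (φ - θ)) volume (-π) π := by
  have hle : -π ≤ π := by linarith [Real.pi_pos]
  rw [intervalIntegrable_iff_integrableOn_Ioc_of_le hle]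
  have hff : IntegrableOn (ff ρ) (Ioc (-π) π) :=
    (integrableOn_ff_Icc ρ hρ).mono_set Ioc_subset_Icc_self
  have h := MeasureTheory.Integrable.bdd_mul (f := fun φ => discPoissonKernel x (φ - θ))
    hff (((pk_continuous hx0 hx1).comp (continuous_id.sub continuous_const)).aestronglyMeasurable)
    (c := (1 - x^2)/(2*π*(1-x)^2)) (Eventually.of_forall fun φ => by
      rw [Real.norm_eq_abs, abs_of_nonneg (pk_nonneg hx0 hx1 _)]
      exact pk_le hx0 hx1 _)
  exact h.congr (by filter_upwards with φ using mul_comm _ _)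

lemma u_cont : Continuous (fun θ => poissonIntegral (ff ρ) x θ) := by
  unfold poissonIntegral
  apply intervalIntegral.continuous_of_dominated_interval
    (bound := fun φ => |ff ρ φ| * ((1 - x^2)/(2*π*(1-x)^2)))
  · intro θ
    apply AEStronglyMeasurable.mul (measurable_ff ρ hρ).aestronglyMeasurable
    exact ((pk_continuous hx0 hx1).comp (continuous_id.sub continuous_const)).aestronglyMeasurable
  · intro θ
    filter_upwards with φ _
    rw [norm_mul, Real.norm_eq_abs, Real.norm_eq_abs,
      abs_of_nonneg (pk_nonneg hx0 hx1 _)]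
    exact mul_le_mul_of_nonneg_left (pk_le hx0 hx1 _) (abs_nonneg _)
  · apply IntervalIntegrable.mul_const
    exact (intervalIntegrable_ff ρ hρ (-π) π).abs
  · filter_upwards with φ _
    apply Continuous.mul continuous_const
    exact (pk_continuous hx0 hx1).comp (continuous_const.sub continuous_id)

lemma u_nonneg (θ : ℝ) : 0 ≤ poissonIntegral (ff ρ) x θ := by
  unfold poissonIntegral
  apply intervalIntegral.integral_nonneg (by linarith [Real.pi_pos])
  intro φ _
  exact mul_nonneg (ff_nonneg ρ hρ φ) (pk_nonneg hx0 hx1 _)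

lemma u_le (θ : ℝ) :
    poissonIntegral (ff ρ) x θ ≤ 4 * ((1 - x^2)/(2*π*(1-x)^2)) := by
  have hle : -π ≤ π := by linarith [Real.pi_pos]
  unfold poissonIntegral
  have h1 : (∫ φ in (-π)..π, ff ρ φ * discPoissonKernel x (φ - θ))
      ≤ ∫ φ in (-π)..π, ff ρ φ * ((1 - x^2)/(2*π*(1-x)^2)) := by
    apply intervalIntegral.integral_mono_on hle (integrand_intble ρ hρ hx0 hx1 θ)
    · exact (intervalIntegrable_ff ρ hρ (-π) π).mul_const _
    · intro φ _
      exact mul_le_mul_of_nonneg_left (pk_le hx0 hx1 _) (ff_nonneg ρ hρ φ)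
  calc (∫ φ in (-π)..π, ff ρ φ * discPoissonKernel x (φ - θ))
      ≤ ∫ φ in (-π)..π, ff ρ φ * ((1 - x^2)/(2*π*(1-x)^2)) := h1
    _ = (∫ φ in (-π)..π, ff ρ φ) * ((1 - x^2)/(2*π*(1-x)^2)) :=
        intervalIntegral.integral_mul_const _ _
    _ = 4 * ((1 - x^2)/(2*π*(1-x)^2)) := by rw [integral_ff ρ hρ]


omit hx0 hx1 in
lemma integral_ff_J (k : ℕ) :
    ∫ θ in ((1/3:ℝ)^k)..((1/3:ℝ)^k + eps ρ k), ff ρ θ = 2 * (1/2:ℝ)^k := by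
  have hab : ((1/3:ℝ)^k) ≤ (1/3:ℝ)^k + eps ρ k := by linarith [eps_pos ρ hρ k]
  rw [intervalIntegral.integral_of_le hab]
  have h1 : ∫ θ in Ioc ((1/3:ℝ)^k) ((1/3:ℝ)^k + eps ρ k), ff ρ θ = ∫ θ in J ρ k, gg ρ θ := by
    apply MeasureTheory.setIntegral_congr_fun (measurableSet_Ioc)
    intro θ hθ
    have hθ' : θ ∈ Ioc (0:ℝ) (3/2) := J_subset ρ hρ k hθ
    apply ff_eq_gg ρ hρ
    constructor
    · exact hθ'.1.le
    · nlinarith [hθ'.2, Real.pi_gt_three]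
  rw [h1, integral_J_gg ρ hρ k]

lemma key_estimate (k : ℕ) (hxk : x < ρ k) :
    (1/2:ℝ)^k ≤
      |∫ θ in ((1/3:ℝ)^k)..((1/3:ℝ)^k + eps ρ k),
        (poissonIntegral (ff ρ) x θ - ff ρ θ)| := by
  set q : ℝ := (1/2:ℝ)^k with hq
  set C : ℝ := (1 - x^2)/(2*π*(1-x)^2) with hC
  have hq0 : 0 < q := by positivity
  have h1x : (0:ℝ) < 1 - x := by linarith
  have hC0 : 0 ≤ C := by
    rw [hC]
    have h2π : (0:ℝ) < 2*π*(1-x)^2 := by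
      have := Real.pi_pos; positivity
    apply div_nonneg (by nlinarith) h2π.le
  have hab : ((1/3:ℝ)^k) ≤ (1/3:ℝ)^k + eps ρ k := by linarith [eps_pos ρ hρ k]
  have hu_int : IntervalIntegrable (fun θ => poissonIntegral (ff ρ) x θ) volume
      ((1/3:ℝ)^k) ((1/3:ℝ)^k + eps ρ k) := (u_cont ρ hρ hx0 hx1).intervalIntegrable _ _
  have hff_int := intervalIntegrable_ff ρ hρ ((1/3:ℝ)^k) ((1/3:ℝ)^k + eps ρ k)
  rw [intervalIntegral.integral_sub hu_int hff_int, integral_ff_J ρ hρ k]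
  -- bound on ∫ u
  have hub : ∫ θ in ((1/3:ℝ)^k)..((1/3:ℝ)^k + eps ρ k), poissonIntegral (ff ρ) x θ ≤ q := by
    have h2 : ‖∫ θ in ((1/3:ℝ)^k)..((1/3:ℝ)^k + eps ρ k), poissonIntegral (ff ρ) x θ‖
        ≤ (4*C) * |((1/3:ℝ)^k + eps ρ k) - (1/3:ℝ)^k| := by
      apply intervalIntegral.norm_integral_le_of_norm_le_const
      intro θ _
      rw [Real.norm_eq_abs, abs_of_nonneg (u_nonneg ρ hρ hx0 hx1 θ)]
      exact u_le ρ hρ hx0 hx1 θ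
    have h3 : |((1/3:ℝ)^k + eps ρ k) - (1/3:ℝ)^k| = eps ρ k := by
      rw [add_sub_cancel_left, abs_of_nonneg (eps_pos ρ hρ k).le]
    rw [h3] at h2
    have h4 : (4*C) * eps ρ k ≤ q := by
      have h5 : (4*C) * eps ρ k ≤ (4*C) * ((1 - ρ k) * q / 4) :=
        mul_le_mul_of_nonneg_left (eps_le' ρ k) (by linarith)
      have h6 : (4*C) * ((1 - ρ k) * q / 4) = (C * (1 - ρ k)) * q := by ring
      have h7 : C * (1 - ρ k) ≤ C * (1 - x) :=
        mul_le_mul_of_nonneg_left (by linarith) hC0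
      have h8 : C * (1 - x) ≤ 1 := by
        rw [hC, div_mul_eq_mul_div, div_le_one (by have := Real.pi_pos; positivity)]
        nlinarith [mul_nonneg (mul_nonneg h1x.le h1x.le)
          (show (0:ℝ) ≤ 2*π - 1 - x by nlinarith [Real.pi_gt_three])]
      calc (4*C) * eps ρ k ≤ (C * (1 - ρ k)) * q := by rw [← h6]; exact h5
        _ ≤ (C * (1 - x)) * q := mul_le_mul_of_nonneg_right h7 hq0.le
        _ ≤ 1 * q := mul_le_mul_of_nonneg_right h8 hq0.le
        _ = q := one_mul q
    calc ∫ θ in ((1/3:ℝ)^k)..((1/3:ℝ)^k + eps ρ k), poissonIntegral (ff ρ) x θ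
        ≤ ‖∫ θ in ((1/3:ℝ)^k)..((1/3:ℝ)^k + eps ρ k), poissonIntegral (ff ρ) x θ‖ :=
          le_abs_self _
      _ ≤ (4*C) * eps ρ k := h2
      _ ≤ q := h4
  have hneg : (∫ θ in ((1/3:ℝ)^k)..((1/3:ℝ)^k + eps ρ k), poissonIntegral (ff ρ) x θ)
      - 2 * q ≤ -q := by linarith
  calc q ≤ -((∫ θ in ((1/3:ℝ)^k)..((1/3:ℝ)^k + eps ρ k), poissonIntegral (ff ρ) x θ)
      - 2 * q) := by linarith
    _ ≤ |(∫ θ in ((1/3:ℝ)^k)..((1/3:ℝ)^k + eps ρ k), poissonIntegral (ff ρ) x θ)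
      - 2 * q| := neg_le_abs _

lemma bdd_alex : BddAbove {v | ∃ a b : ℝ, a ≤ b ∧ b - a ≤ 2 * π ∧
    v = |∫ θ in a..b, (poissonIntegral (ff ρ) x θ - ff ρ θ)|} := by
  set C : ℝ := (1 - x^2)/(2*π*(1-x)^2) with hC
  refine ⟨(4*C) * (2*π) + 4, ?_⟩
  rintro v ⟨a, b, hab, hba, rfl⟩
  have hu_int : IntervalIntegrable (fun θ => poissonIntegral (ff ρ) x θ) volume a b :=
    (u_cont ρ hρ hx0 hx1).intervalIntegrable _ _
  have hff_int := intervalIntegrable_ff ρ hρ a b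
  rw [intervalIntegral.integral_sub hu_int hff_int]
  have h1 : |∫ θ in a..b, poissonIntegral (ff ρ) x θ| ≤ (4*C) * (2*π) := by
    have h2 : ‖∫ θ in a..b, poissonIntegral (ff ρ) x θ‖ ≤ (4*C) * |b - a| := by
      apply intervalIntegral.norm_integral_le_of_norm_le_const
      intro θ _
      rw [Real.norm_eq_abs, abs_of_nonneg (u_nonneg ρ hρ hx0 hx1 θ)]
      exact u_le ρ hρ hx0 hx1 θ
    have hC0 : 0 ≤ 4*C := by
      have h1x : (0:ℝ) < 1 - x := by linarith
      have h2π : (0:ℝ) < 2*π*(1-x)^2 := by have := Real.pi_pos; positivity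
      have : 0 ≤ C := div_nonneg (by nlinarith) h2π.le
      linarith
    calc |∫ θ in a..b, poissonIntegral (ff ρ) x θ| ≤ (4*C) * |b - a| := h2
      _ ≤ (4*C) * (2*π) := by
          apply mul_le_mul_of_nonneg_left _ hC0
          rw [abs_of_nonneg (by linarith)]
          exact hba
  have h3 : |∫ θ in a..b, ff ρ θ| ≤ 4 := by
    rw [abs_of_nonneg (intervalIntegral.integral_nonneg hab (fun θ _ => ff_nonneg ρ hρ θ))]
    have h4 : ∫ θ in a..b, ff ρ θ ≤ ∫ θ in a..(a + 2*π), ff ρ θ := by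
      apply intervalIntegral.integral_mono_interval (le_refl a) hab (by linarith)
      · exact Filter.Eventually.of_forall (fun θ => ff_nonneg ρ hρ θ)
      · exact intervalIntegrable_ff ρ hρ a (a + 2*π)
    rw [integral_ff_period ρ hρ a] at h4
    exact h4
  calc |(∫ θ in a..b, poissonIntegral (ff ρ) x θ) - ∫ θ in a..b, ff ρ θ|
      ≤ |∫ θ in a..b, poissonIntegral (ff ρ) x θ| + |∫ θ in a..b, ff ρ θ| := abs_sub _ _
    _ ≤ (4*C) * (2*π) + 4 := add_le_add h1 h3

lemma alex_ge (k : ℕ) (hxk : x < ρ k) :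
    (1/2:ℝ)^k ≤ alexNorm (fun θ => poissonIntegral (ff ρ) x θ - ff ρ θ) := by
  apply le_trans (key_estimate ρ hρ hx0 hx1 k hxk)
  apply le_csSup (bdd_alex ρ hρ hx0 hx1)
  refine ⟨(1/3:ℝ)^k, (1/3:ℝ)^k + eps ρ k, by linarith [eps_pos ρ hρ k], ?_, rfl⟩
  have h1 : eps ρ k ≤ (1/3:ℝ)^(k+1) := eps_le ρ k
  have h2 : ((1:ℝ)/3)^(k+1) ≤ 1 := pow_le_one₀ (by norm_num) (by norm_num)
  have := Real.pi_gt_three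
  linarith

end SlowPoisson

/-- the Alexiewicz-norm convergence `‖u_r - f‖ → 0` can be arbitrarily
slow: given decreasing `A : [0,1) → (0,1/2)` with `A(r) → 0` as `r → 1⁻`, there is a
2π-periodic `f ∈ L¹[-π,π]` with `‖u_r - f‖ ≥ A(r)` for all `0 ≤ r < 1`. -/
theorem alex_convergence_arbitrarily_slow (A : ℝ → ℝ)
    (hA : ∀ r ∈ Set.Ico (0 : ℝ) 1, A r ∈ Set.Ioo (0 : ℝ) (1 / 2))
    (hmono : AntitoneOn A (Set.Ico 0 1))
    (hlim : Tendsto A (𝓝[<] 1) (𝓝 0)) :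
    ∃ f : ℝ → ℝ, Function.Periodic f (2 * π) ∧ IntegrableOn f (Set.Icc (-π) π) ∧
      ∀ r ∈ Set.Ico (0 : ℝ) 1,
        A r ≤ alexNorm (fun θ => poissonIntegral f r θ - f θ) := by
  have hc : ∀ k : ℕ, ∃ cv : ℝ, cv < 1 ∧ ∀ x, cv < x → x < 1 → A x < (1/2:ℝ)^(k+1) := by
    intro k
    have hp : (0:ℝ) < (1/2:ℝ)^(k+1) := by positivity
    have h1 : ∀ᶠ x in 𝓝[<] (1:ℝ), A x < (1/2:ℝ)^(k+1) := hlim.eventually_lt_const hp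
    rw [Filter.Eventually, mem_nhdsLT_iff_exists_Ioo_subset] at h1
    obtain ⟨l, hl, hsub⟩ := h1
    exact ⟨l, hl, fun x hx1 hx2 => hsub ⟨hx1, hx2⟩⟩
  choose c hc1 hc2 using hc
  set ρ : ℕ → ℝ := fun k => max (1 - 1/(k+1)) ((c k + 1)/2) with hρdef
  have hρ1 : ∀ k, ρ k < 1 := by
    intro k
    apply max_lt
    · have : (0:ℝ) < 1/((k:ℝ)+1) := by positivity
      linarith
    · linarith [hc1 k]
  refine ⟨SlowPoisson.ff ρ, SlowPoisson.ff_periodic ρ,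
    SlowPoisson.integrableOn_ff_Icc ρ hρ1, ?_⟩
  rintro r ⟨hr0, hr1⟩
  have hex : ∃ k : ℕ, r < ρ k := by
    obtain ⟨n, hn⟩ := exists_nat_gt (1/(1 - r))
    refine ⟨n, lt_of_lt_of_le ?_ (le_max_left _ _)⟩
    have h1r : (0:ℝ) < 1 - r := by linarith
    have hn1 : (0:ℝ) < (n:ℝ)+1 := by positivity
    rw [div_lt_iff₀ h1r] at hn
    have h2 : 1/((n:ℝ)+1) < 1 - r := by
      rw [div_lt_iff₀ hn1]; nlinarith
    linarith
  have hks : r < ρ (Nat.find hex) := Nat.find_spec hex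
  have halex := SlowPoisson.alex_ge ρ hρ1 hr0 hr1 (Nat.find hex) hks
  refine le_trans ?_ halex
  rcases Nat.eq_zero_or_pos (Nat.find hex) with h0 | hpos
  · rw [h0, pow_zero]
    linarith [(hA r ⟨hr0, hr1⟩).2]
  · obtain ⟨j, hj⟩ : ∃ j, Nat.find hex = j + 1 := ⟨Nat.find hex - 1, by omega⟩
    have hmin : ¬ (r < ρ j) := Nat.find_min hex (by omega)
    push_neg at hmin
    have hcj : c j < r := by
      have h1 : (c j + 1)/2 ≤ ρ j := le_max_right _ _
      have h2 := hc1 j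
      linarith
    have h3 := hc2 j r hcj hr1
    rw [hj]
    linarith
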